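/- (Riesz projection equals spectral projection.) Let H be a hermitian n×n complex matrix, c ∈ ℂ and r > 0, and suppose no eigenvalue κ of H satisfies |κ − c| = r. Then the circle integral (2πi)⁻¹ · ∮_{|z−c|=r} (z·1 − H)⁻¹ dz equals Σ_{κ ∈ spectrum(H), |κ−c| < r} Q_κ(H), the spectral projection of H onto the open disc of radius r about c. -/

import Mathlib

open scoped Matrix.Norms.L2Operator
open Real

/-- The orthogonal projection (as a matrix) onto the eigenspace of `H` for the (real)
eigenvalue `κ`; it is `0` when `κ` is not an eigenvalue of `H`. -/
noncomputable def eigProj {n : Type*} [Fintype n] [DecidableEq n]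
    (H : Matrix n n ℂ) (κ : ℝ) : Matrix n n ℂ :=
  Matrix.toEuclideanLin.symm
    ((Module.End.eigenspace (Matrix.toEuclideanLin H) (κ : ℂ)).subtype ∘ₗ
      (Submodule.orthogonalProjectionOnto (Module.End.eigenspace (Matrix.toEuclideanLin H) (κ : ℂ))).toLinearMap)

/-- The spectral projection of `H` onto a set `I ⊆ ℝ`, i.e. `Σ_{κ ∈ spectrum(H) ∩ I} Q_κ(H)`. -/
noncomputable def specProj {n : Type*} [Fintype n] [DecidableEq n]
    (H : Matrix n n ℂ) (I : Set ℝ) : Matrix n n ℂ :=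
  ∑ᶠ κ ∈ I, eigProj H κ

section RieszAux

variable {n : Type*} [Fintype n] [DecidableEq n] (H : Matrix n n ℂ) (hH : H.IsHermitian)

lemma hasEigenvector_basis (j : n) :
    Module.End.HasEigenvector (Matrix.toEuclideanLin H) ((hH.eigenvalues j : ℂ))
      (hH.eigenvectorBasis j) := by
  refine ⟨Module.End.mem_eigenspace_iff.mpr ?_, hH.eigenvectorBasis.orthonormal.ne_zero j⟩
  have h := hH.mulVec_eigenvectorBasis j
  simp only [Matrix.toEuclideanLin_apply]
  ext i
  have := congrFun h i
  simp at this ⊢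
  simp [this]

lemma toEuclideanLin_eigProj (κ : ℝ) :
    Matrix.toEuclideanLin (eigProj H κ) =
      (Module.End.eigenspace (Matrix.toEuclideanLin H) (κ : ℂ)).subtype ∘ₗ
        (Submodule.orthogonalProjectionOnto (Module.End.eigenspace (Matrix.toEuclideanLin H) (κ : ℂ))).toLinearMap :=
  Matrix.toEuclideanLin.apply_symm_apply _

lemma eigProj_apply_basis (κ : ℝ) (j : n) :
    Matrix.toEuclideanLin (eigProj H κ) (hH.eigenvectorBasis j) =
      if κ = hH.eigenvalues j then hH.eigenvectorBasis j else 0 := by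
  rw [toEuclideanLin_eigProj]
  by_cases h : κ = hH.eigenvalues j
  · subst h
    simp only [if_pos rfl, LinearMap.comp_apply, ContinuousLinearMap.coe_coe,
      Submodule.subtype_apply]
    rw [← Submodule.starProjection_apply, Submodule.starProjection_eq_self_iff.mpr (hasEigenvector_basis H hH j).1]
    simp
  · rw [if_neg h]
    have horth := ((Matrix.isHermitian_iff_isSymmetric.mp hH).orthogonalFamily_eigenspaces)
    have hmem : hH.eigenvectorBasis j ∈
        (Module.End.eigenspace (Matrix.toEuclideanLin H) (κ : ℂ))ᗮ := by
      intro w hw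
      exact horth (fun hc => h (by exact_mod_cast hc))
        ⟨w, hw⟩ ⟨hH.eigenvectorBasis j, (hasEigenvector_basis H hH j).1⟩
    simp only [LinearMap.comp_apply, ContinuousLinearMap.coe_coe, Submodule.subtype_apply]
    rw [Submodule.orthogonalProjectionOnto_apply_of_mem_orthogonal hmem]
    simp

lemma sum_eigProj :
    ∑ κ ∈ Finset.image hH.eigenvalues Finset.univ, eigProj H κ = 1 := by
  apply Matrix.toEuclideanLin.injective
  rw [map_sum]
  apply Module.Basis.ext hH.eigenvectorBasis.toBasis
  intro j
  simp only [OrthonormalBasis.coe_toBasis]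
  rw [LinearMap.sum_apply]
  have : ∀ κ ∈ Finset.image hH.eigenvalues Finset.univ,
      Matrix.toEuclideanLin (eigProj H κ) (hH.eigenvectorBasis j)
        = if κ = hH.eigenvalues j then hH.eigenvectorBasis j else 0 :=
    fun κ _ => eigProj_apply_basis H hH κ j
  rw [Finset.sum_congr rfl this, Finset.sum_ite_eq' (Finset.image hH.eigenvalues Finset.univ)]
  have h1 : Matrix.toEuclideanLin (1 : Matrix n n ℂ) (hH.eigenvectorBasis j)
      = hH.eigenvectorBasis j := by
    simp [Matrix.toEuclideanLin_apply]
  rw [h1]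
  simp [Finset.mem_image]

lemma eigProj_eq_zero {κ : ℝ} (h : κ ∉ Finset.image hH.eigenvalues Finset.univ) :
    eigProj H κ = 0 := by
  have hbot : Module.End.eigenspace (Matrix.toEuclideanLin H) (κ : ℂ) = ⊥ := by
    rw [Submodule.eq_bot_iff]
    intro v hv
    have hrep := hH.eigenvectorBasis.sum_repr' v
    have hzero : ∀ j : n, (inner ℂ (hH.eigenvectorBasis j) v : ℂ) = 0 := by
      intro j
      have hne : κ ≠ hH.eigenvalues j := fun hc => h (by simp [hc, Finset.mem_image])
      have horth := ((Matrix.isHermitian_iff_isSymmetric.mp hH).orthogonalFamily_eigenspaces)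
      exact horth (fun hc : (hH.eigenvalues j : ℂ) = (κ:ℂ) => hne (by exact_mod_cast hc.symm))
        ⟨hH.eigenvectorBasis j, (hasEigenvector_basis H hH j).1⟩ ⟨v, hv⟩
    rw [← hrep]
    simp [hzero]
  apply Matrix.toEuclideanLin.injective
  rw [toEuclideanLin_eigProj, hbot]
  apply LinearMap.ext
  intro v
  simp [Submodule.eq_zero_of_bot_submodule]

lemma toEuclideanLin_mul' (A B : Matrix n n ℂ) :
    Matrix.toEuclideanLin (A * B) =
      (Matrix.toEuclideanLin A) ∘ₗ (Matrix.toEuclideanLin B) := by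
  apply LinearMap.ext
  intro v
  simp [Matrix.toEuclideanLin_apply, Matrix.mulVec_mulVec]

lemma mul_eigProj (κ : ℝ) : H * eigProj H κ = (κ : ℂ) • eigProj H κ := by
  apply Matrix.toEuclideanLin.injective
  rw [toEuclideanLin_mul', map_smul, toEuclideanLin_eigProj]
  apply LinearMap.ext
  intro v
  simp only [LinearMap.comp_apply, ContinuousLinearMap.coe_coe, Submodule.subtype_apply,
    LinearMap.smul_apply]
  exact Module.End.mem_eigenspace_iff.mp
    (Submodule.orthogonalProjectionOnto (Module.End.eigenspace (Matrix.toEuclideanLin H) (κ : ℂ)) v).2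

lemma resolvent_eq {z : ℂ} (hz : ∀ j : n, z ≠ (hH.eigenvalues j : ℂ)) :
    (z • (1 : Matrix n n ℂ) - H)⁻¹ =
      ∑ κ ∈ Finset.image hH.eigenvalues Finset.univ, (z - κ)⁻¹ • eigProj H κ := by
  apply Matrix.inv_eq_right_inv
  rw [Finset.mul_sum]
  have hterm : ∀ κ ∈ Finset.image hH.eigenvalues Finset.univ,
      (z • (1 : Matrix n n ℂ) - H) * ((z - κ)⁻¹ • eigProj H κ) = eigProj H κ := by
    intro κ hκ
    obtain ⟨j, _, hj⟩ := Finset.mem_image.mp hκ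
    have hne : z - (κ : ℂ) ≠ 0 := by
      rw [sub_ne_zero]; rw [← hj]; exact hz j
    rw [Matrix.mul_smul, Matrix.sub_mul, Matrix.smul_mul, Matrix.one_mul, mul_eigProj,
      smul_sub, smul_smul, smul_smul, ← sub_smul, ← mul_sub, inv_mul_cancel₀ hne, one_smul]
  rw [Finset.sum_congr rfl hterm, sum_eigProj]

theorem riesz_main (c : ℂ) (r : ℝ) (hr : 0 < r)
    (hcirc : ∀ κ : ℝ, Module.End.HasEigenvalue (Matrix.toEuclideanLin H) (κ : ℂ) →
      ‖(κ : ℂ) - c‖ ≠ r) :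
    (2 * (π : ℂ) * Complex.I)⁻¹ •
        (∮ z in C(c, r), (z • (1 : Matrix n n ℂ) - H)⁻¹) =
      ∑ κ ∈ Finset.image hH.eigenvalues Finset.univ,
        if ‖(κ : ℂ) - c‖ < r then eigProj H κ else 0 := by
  classical
  haveI : CompleteSpace (Matrix n n ℂ) := FiniteDimensional.complete ℂ _
  set s := Finset.image hH.eigenvalues Finset.univ with hs
  have heig : ∀ κ ∈ s, ‖(κ : ℂ) - c‖ ≠ r := by
    intro κ hκ
    obtain ⟨j, _, hj⟩ := Finset.mem_image.mp hκ
    exact hcirc κ (hj ▸ Module.End.hasEigenvalue_of_hasEigenvector (hasEigenvector_basis H hH j))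
  have hne : ∀ (κ : ℝ), κ ∈ s → ∀ θ : ℝ, circleMap c r θ - (κ : ℂ) ≠ 0 := by
    intro κ hκ θ h0
    have h1 : circleMap c r θ ∈ Metric.sphere c r := circleMap_mem_sphere c hr.le θ
    rw [sub_eq_zero] at h0
    rw [Metric.mem_sphere, h0, Complex.dist_eq] at h1
    exact heig κ hκ h1
  -- replace integrand by the explicit sum on the sphere
  have hEq : Set.EqOn (fun z : ℂ => (z • (1 : Matrix n n ℂ) - H)⁻¹)
      (fun z : ℂ => ∑ κ ∈ s, (z - (κ:ℂ))⁻¹ • eigProj H κ) (Metric.sphere c r) := by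
    intro z hz
    refine resolvent_eq H hH fun j hj => ?_
    have hmem : (hH.eigenvalues j : ℝ) ∈ s := Finset.mem_image.mpr ⟨j, Finset.mem_univ _, rfl⟩
    rw [Metric.mem_sphere, Complex.dist_eq, hj] at hz
    exact heig _ hmem hz
  rw [circleIntegral.integral_congr hr.le hEq]
  -- pull the finite sum out of the integral
  have hsum : (∮ z in C(c, r), ∑ κ ∈ s, (z - (κ:ℂ))⁻¹ • eigProj H κ)
      = ∑ κ ∈ s, ∮ z in C(c, r), (z - (κ:ℂ))⁻¹ • eigProj H κ := by
    simp only [circleIntegral]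
    rw [← intervalIntegral.integral_finset_sum]
    · congr 1
      ext θ
      rw [Finset.smul_sum]
    · intro κ hκ
      apply Continuous.intervalIntegrable
      simp only [deriv_circleMap]
      exact ((continuous_circleMap 0 r).mul continuous_const).smul
        ((((continuous_circleMap c r).sub continuous_const).inv₀ (hne κ hκ)).smul
          continuous_const)
  rw [hsum]
  have hterm : ∀ κ ∈ s, (∮ z in C(c, r), (z - (κ:ℂ))⁻¹ • eigProj H κ)
      = (if ‖(κ : ℂ) - c‖ < r then (2 * (π:ℂ) * Complex.I) else 0) • eigProj H κ := by
    intro κ hκ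
    rw [circleIntegral.integral_smul_const]
    congr 1
    by_cases hlt : ‖(κ : ℂ) - c‖ < r
    · rw [if_pos hlt]
      exact circleIntegral.integral_sub_inv_of_mem_ball (by rwa [Metric.mem_ball, Complex.dist_eq])
    · rw [if_neg hlt]
      have hgt : r < ‖(κ : ℂ) - c‖ :=
        lt_of_le_of_ne (not_lt.mp hlt) (Ne.symm (heig κ hκ))
      have hnz : ∀ z ∈ Metric.closedBall c r, z - (κ : ℂ) ≠ 0 := by
        intro z hz h0
        rw [sub_eq_zero] at h0
        rw [Metric.mem_closedBall, h0, Complex.dist_eq] at hz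
        exact absurd (lt_of_lt_of_le hgt hz) (lt_irrefl _)
      refine Complex.circleIntegral_eq_zero_of_differentiable_on_off_countable hr.le Set.countable_empty
        ?_ ?_
      · exact ((continuous_id.sub continuous_const).continuousOn).inv₀ hnz
      · intro z hz
        exact (differentiableAt_id.sub_const _).inv
          (hnz z (Metric.ball_subset_closedBall hz.1))
  rw [Finset.sum_congr rfl hterm, Finset.smul_sum]
  refine Finset.sum_congr rfl fun κ hκ => ?_
  rw [smul_smul]
  by_cases hlt : ‖(κ : ℂ) - c‖ < r
  · rw [if_pos hlt, if_pos hlt, inv_mul_cancel₀ Complex.two_pi_I_ne_zero, one_smul]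
  · rw [if_neg hlt, if_neg hlt, mul_zero, zero_smul]

end RieszAux

/-- Riesz projection equals spectral projection: if no eigenvalue of the hermitian matrix `H`
lies on the circle `|z - c| = r`, then `(2πi)⁻¹ ∮_{|z-c|=r} (z·1 - H)⁻¹ dz` is the spectral
projection of `H` onto the open disc of radius `r` about `c`. -/
theorem riesz_projection_eq_spectral_projection
    {n : Type*} [Fintype n] [DecidableEq n]
    (H : Matrix n n ℂ) (hH : H.IsHermitian) (c : ℂ) (r : ℝ) (hr : 0 < r)
    (hcirc : ∀ κ : ℝ, Module.End.HasEigenvalue (Matrix.toEuclideanLin H) (κ : ℂ) →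
      ‖(κ : ℂ) - c‖ ≠ r) :
    (2 * (π : ℂ) * Complex.I)⁻¹ •
        (∮ z in C(c, r), (z • (1 : Matrix n n ℂ) - H)⁻¹) =
      specProj H {κ : ℝ | ‖(κ : ℂ) - c‖ < r} := by
  classical
  rw [riesz_main H hH c r hr hcirc]
  rw [specProj]
  rw [finsum_mem_eq_sum_of_inter_support_eq (eigProj H)
    (t := (Finset.image hH.eigenvalues Finset.univ).filter
      (fun κ => ‖(κ : ℂ) - c‖ < r))]
  · rw [Finset.sum_filter]
  · ext κ
    simp only [Set.mem_inter_iff, Set.mem_setOf_eq, Function.mem_support, Finset.coe_filter,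
      Finset.mem_filter]
    constructor
    · rintro ⟨h1, h2⟩
      refine ⟨⟨?_, h1⟩, h2⟩
      by_contra hk
      exact h2 (eigProj_eq_zero H hH hk)
    · rintro ⟨⟨_, h1⟩, h2⟩
      exact ⟨h1, h2⟩
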